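/- arXiv:1102.2195 — 6 statements merged into one kernel-verified Lean document; each statement's English description precedes it below -/
import Mathlib

section
/- Let p be an element of a complete, lower continuous lattice L. Then every finite join-cover of p can be refined to a tight join-cover of p. -/
/-- A finite set `E` covers `p` if `p ≤ ⋁E`. -/
def Covers {α : Type*} [CompleteLattice α] (p : α) (E : Finset α) : Prop :=
  p ≤ E.sup id

/-- `X` refines `E`: every element of `X` lies below some element of `E`. -/
def Refines {α : Type*} [CompleteLattice α] (X E : Finset α) : Prop :=
  ∀ x ∈ X, ∃ e ∈ E, x ≤ e

/-- `E` covers `p` tightly: `E` covers `p`, no element of `E` is the least element,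
and `p ≰ x ⊔ ⋁(E \ {u})` whenever `u ∈ E` and `x < u`. -/
def TightCovers {α : Type*} [CompleteLattice α] [DecidableEq α]
    (p : α) (E : Finset α) : Prop :=
  Covers p E ∧ (∀ u ∈ E, u ≠ ⊥) ∧
    ∀ u ∈ E, ∀ x, x < u → ¬ p ≤ x ⊔ (E.erase u).sup id

/-- `L` is lower continuous: `a ⊔ ⋀D = ⋀ {a ⊔ x : x ∈ D}` for every nonempty
downward directed `D`. -/
def LowerContinuous (α : Type*) [CompleteLattice α] : Prop :=
  ∀ (a : α) (D : Set α), D.Nonempty → DirectedOn (· ≥ ·) D →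
    a ⊔ sInf D = ⨅ x ∈ D, a ⊔ x

/-- Key lemma: minimize a component of a join cover, using Zorn + lower continuity. -/
lemma key_min {α : Type*} [CompleteLattice α] (hlc : LowerContinuous α) (p b u : α)
    (h : p ≤ u ⊔ b) : ∃ m, m ≤ u ∧ p ≤ m ⊔ b ∧ ∀ x, x < m → ¬ p ≤ x ⊔ b := by
  set s : Set αᵒᵈ := {x : αᵒᵈ | OrderDual.ofDual x ≤ u ∧ p ≤ OrderDual.ofDual x ⊔ b} with hs
  have hchain : ∀ c ⊆ s, IsChain (· ≤ ·) c → ∀ y ∈ c, ∃ lb ∈ s, ∀ z ∈ c, z ≤ lb := by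
    intro c hcs hc y hy
    set D : Set α := {a | OrderDual.toDual a ∈ c} with hD
    have hDne : D.Nonempty := ⟨OrderDual.ofDual y, hy⟩
    have hdir : DirectedOn (· ≥ ·) D := by
      intro a ha b' hb'
      rcases eq_or_ne a b' with rfl | hab
      · exact ⟨a, ha, le_rfl, le_rfl⟩
      · rcases hc ha hb' (fun hh => hab (OrderDual.toDual_inj.mp hh)) with h1 | h1
        · exact ⟨b', hb', h1, le_rfl⟩
        · exact ⟨a, ha, le_rfl, h1⟩
    refine ⟨OrderDual.toDual (sInf D), ⟨?_, ?_⟩, fun z hz => ?_⟩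
    · exact le_trans (sInf_le hy) (hcs hy).1
    · have := hlc b D hDne hdir
      rw [show OrderDual.ofDual (OrderDual.toDual (sInf D)) = sInf D from rfl, sup_comm (sInf D) b, this]
      exact le_iInf₂ fun x hx => by rw [sup_comm]; exact (hcs hx).2
    · exact sInf_le hz
  obtain ⟨m, -, hm⟩ := zorn_le_nonempty₀ s hchain (OrderDual.toDual u) ⟨le_rfl, h⟩
  refine ⟨OrderDual.ofDual m, hm.1.1, hm.1.2, fun x hx hpx => ?_⟩
  have hxm : (OrderDual.toDual x) ∈ s := ⟨hx.le.trans hm.1.1, hpx⟩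
  have := hm.2 hxm (show m ≤ OrderDual.toDual x from hx.le)
  exact absurd (show OrderDual.ofDual m ≤ x from this) (not_le_of_gt hx)

lemma tight_step {α : Type*} [CompleteLattice α] [DecidableEq α]
    (hlc : LowerContinuous α) (p : α) :
    ∀ (n : ℕ) (G H : Finset α), H.card = n →
      p ≤ (G ∪ H).sup id →
      (∀ u ∈ G, u ≠ ⊥) →
      (∀ u ∈ G, ∀ x, x < u → ¬ p ≤ x ⊔ ((G ∪ H).erase u).sup id) →
      ∃ F, TightCovers p F ∧ Refines F (G ∪ H) := by
  intro n
  induction n with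
  | zero =>
    intro G H hcard hcov hbot htight
    have hH : H = ∅ := Finset.card_eq_zero.mp hcard
    subst hH
    rw [Finset.union_empty] at *
    exact ⟨G, ⟨hcov, hbot, htight⟩, fun x hx => ⟨x, hx, le_rfl⟩⟩
  | succ n ih =>
    intro G H hcard hcov hbot htight
    have hHne : H.Nonempty := Finset.card_pos.mp (by omega)
    obtain ⟨u, hu⟩ := hHne
    have hcard' : (H.erase u).card = n := by
      rw [Finset.card_erase_of_mem hu]; omega
    by_cases huG : u ∈ G
    · -- u already in G: just drop it from H
      have hset : G ∪ H.erase u = G ∪ H := by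
        ext a; simp only [Finset.mem_union, Finset.mem_erase]
        constructor
        · rintro (h | ⟨-, h⟩); exacts [Or.inl h, Or.inr h]
        · rintro (h | h)
          · exact Or.inl h
          · rcases eq_or_ne a u with rfl | hne
            · exact Or.inl huG
            · exact Or.inr ⟨hne, h⟩
      obtain ⟨F, hF, hFr⟩ := ih G (H.erase u) hcard' (hset ▸ hcov) hbot
        (by rw [hset]; exact htight)
      exact ⟨F, hF, fun x hx => (hset ▸ hFr x hx : _)⟩
    · -- u ∉ G
      have hset : (G ∪ H).erase u = G ∪ H.erase u := by
        ext a; simp only [Finset.mem_erase, Finset.mem_union]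
        constructor
        · rintro ⟨hne, h | h⟩; exacts [Or.inl h, Or.inr ⟨hne, h⟩]
        · rintro (h | ⟨hne, h⟩)
          · exact ⟨fun e => huG (e ▸ h), Or.inl h⟩
          · exact ⟨hne, Or.inr h⟩
      set b : α := (G ∪ H.erase u).sup id with hb
      have hub : p ≤ u ⊔ b := by
        refine hcov.trans (Finset.sup_le fun a ha => ?_)
        rcases Finset.mem_union.mp ha with h | h
        · exact le_sup_of_le_right (Finset.le_sup (Finset.mem_union_left _ h))
        · rcases eq_or_ne a u with rfl | hne
          · exact le_sup_left
          · exact le_sup_of_le_right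
              (Finset.le_sup (Finset.mem_union_right _ (Finset.mem_erase.mpr ⟨hne, h⟩)))
      obtain ⟨m, hmu, hpm, hmin⟩ := key_min hlc p b u hub
      rcases eq_or_ne m ⊥ with rfl | hmne
      · -- m = ⊥ : drop u entirely
        have hcov' : p ≤ (G ∪ H.erase u).sup id := by
          simpa using hpm
        refine ih G (H.erase u) hcard' hcov' hbot (fun e he x hx hle => ?_) |>.imp
          fun F ⟨hF, hFr⟩ => ⟨hF, fun x hx => ?_⟩
        · refine htight e he x hx (hle.trans (sup_le_sup_left ?_ x))
          exact Finset.sup_mono (Finset.erase_subset_erase _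
            (by rw [← hset]; exact Finset.erase_subset _ _))
        · obtain ⟨e, he, hxe⟩ := hFr x hx
          rcases Finset.mem_union.mp he with h | h
          · exact ⟨e, Finset.mem_union_left _ h, hxe⟩
          · exact ⟨e, Finset.mem_union_right _ (Finset.mem_of_mem_erase h), hxe⟩
      · -- m ≠ ⊥ : replace u by m
        set G' := insert m G with hG'
        have hcov' : p ≤ (G' ∪ H.erase u).sup id := by
          refine hpm.trans (sup_le ?_ ?_)
          · exact Finset.le_sup (f := id) (Finset.mem_union_left _ (Finset.mem_insert_self _ _))
          · exact Finset.sup_mono (Finset.union_subset_union_left (Finset.subset_insert _ _))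
        have hbot' : ∀ v ∈ G', v ≠ ⊥ := by
          intro v hv
          rcases Finset.mem_insert.mp hv with rfl | hv
          · exact hmne
          · exact hbot v hv
        have hsub : (G' ∪ H.erase u).erase m ⊆ G ∪ H.erase u := by
          intro a ha
          obtain ⟨hne, ha⟩ := Finset.mem_erase.mp ha
          rcases Finset.mem_union.mp ha with h | h
          · rcases Finset.mem_insert.mp h with rfl | h
            · exact absurd rfl hne
            · exact Finset.mem_union_left _ h
          · exact Finset.mem_union_right _ h
        have htight' : ∀ v ∈ G', ∀ x, x < v →
            ¬ p ≤ x ⊔ ((G' ∪ H.erase u).erase v).sup id := by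
          intro v hv x hx hle
          rcases Finset.mem_insert.mp hv with rfl | hvG
          · exact hmin x hx (hle.trans (sup_le_sup_left (Finset.sup_mono hsub) x))
          · rcases eq_or_ne v m with rfl | hvm
            · exact hmin x hx (hle.trans (sup_le_sup_left (Finset.sup_mono hsub) x))
            · refine htight v hvG x hx (hle.trans (sup_le_sup_left ?_ x))
              refine Finset.sup_le fun a ha => ?_
              obtain ⟨hav, ha⟩ := Finset.mem_erase.mp ha
              rcases Finset.mem_union.mp ha with h | h
              · rcases Finset.mem_insert.mp h with rfl | h
                · exact hmu.trans (Finset.le_sup (f := id) (Finset.mem_erase.mpr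
                    ⟨fun e : u = v => huG (e ▸ hvG), Finset.mem_union_right G hu⟩))
                · exact Finset.le_sup (Finset.mem_erase.mpr ⟨hav, Finset.mem_union_left _ h⟩)
              · exact Finset.le_sup (Finset.mem_erase.mpr
                  ⟨hav, Finset.mem_union_right _ (Finset.mem_of_mem_erase h)⟩)
        obtain ⟨F, hF, hFr⟩ := ih G' (H.erase u) hcard' hcov' hbot' htight'
        refine ⟨F, hF, fun x hx => ?_⟩
        obtain ⟨e, he, hxe⟩ := hFr x hx
        rcases Finset.mem_union.mp he with h | h
        · rcases Finset.mem_insert.mp h with rfl | h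
          · exact ⟨u, Finset.mem_union_right _ hu, hxe.trans hmu⟩
          · exact ⟨e, Finset.mem_union_left _ h, hxe⟩
        · exact ⟨e, Finset.mem_union_right _ (Finset.mem_of_mem_erase h), hxe⟩

/-- In a complete, lower continuous lattice, every finite join-cover of `p`
can be refined to a tight join-cover of `p`. -/
theorem stmt4 {α : Type*} [CompleteLattice α] [DecidableEq α]
    (hlc : LowerContinuous α) (p : α) (E : Finset α) (hE : Covers p E) :
    ∃ F : Finset α, TightCovers p F ∧ Refines F E := by
  have := tight_step hlc p E.card ∅ E rfl (by simpa [Covers] using hE)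
    (by simp) (by simp)
  simpa using this
end

section
/- Let p be an element of a complete lower continuous lattice L. If L is well-founded (every nonempty subset has a minimal element), then every finite join-cover of p can be refined to a minimal join-cover of p. -/
/-- `E` covers `p` minimally: `E` covers `p` and every finite `X` covering `p`
and refining `E` contains `E`. -/
def MinCovers {α : Type*} [CompleteLattice α] (p : α) (E : Finset α) : Prop :=
  Covers p E ∧ ∀ X : Finset α, Covers p X → Refines X E → E ⊆ X

section DM

variable {α : Type*} [Preorder α]

/-- One step of the Dershowitz–Manna order: `N` is obtained from `M` by removing one
element `a` and adding finitely many elements all strictly below `a`. -/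
def MStep (N M : Multiset α) : Prop :=
  ∃ (a : α) (M' K : Multiset α), M = a ::ₘ M' ∧ N = M' + K ∧ ∀ k ∈ K, k < a

theorem acc_cons_of_acc (a : α)
    (ha : ∀ b < a, ∀ M : Multiset α, Acc MStep M → Acc MStep (b ::ₘ M))
    (M : Multiset α) (hM : Acc MStep M) : Acc MStep (a ::ₘ M) := by
  induction hM with
  | intro M hacc ih =>
    constructor
    intro N hN
    obtain ⟨b, M'', K, hM1, hN1, hK⟩ := hN
    rcases Multiset.cons_eq_cons.mp hM1 with ⟨rfl, rfl⟩ | ⟨hne, U, rfl, hU2⟩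
    · -- N = M + K with all of K below a
      subst hN1
      clear hM1
      induction K using Multiset.induction with
      | empty => simpa using Acc.intro M hacc
      | cons c K' ihK =>
        have hc : c < a := hK c (Multiset.mem_cons_self _ _)
        have hK' : ∀ k ∈ K', k < a := fun k hk => hK k (Multiset.mem_cons_of_mem hk)
        have : M + (c ::ₘ K') = c ::ₘ (M + K') := by
          rw [Multiset.add_cons]
        rw [this]
        exact ha c hc _ (ihK hK')
    · -- M = b ::ₘ U, and N = (a ::ₘ U) + K
      subst hU2 hN1
      have hstep : MStep (U + K) (b ::ₘ U) := ⟨b, U, K, rfl, rfl, hK⟩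
      have : (a ::ₘ U) + K = a ::ₘ (U + K) := by
        rw [Multiset.cons_add]
      rw [this]
      exact ih _ hstep

theorem acc_cons [WellFoundedLT α] (a : α) :
    ∀ M : Multiset α, Acc MStep M → Acc MStep (a ::ₘ M) := by
  induction a using (IsWellFounded.wf (r := ((· < ·) : α → α → Prop))).induction with
  | _ a iha => exact acc_cons_of_acc a (fun b hb => iha b hb)

theorem mstep_wf [WellFoundedLT α] : WellFounded (MStep (α := α)) := by
  constructor
  intro M
  induction M using Multiset.induction with
  | empty =>
    constructor
    intro N hN
    obtain ⟨a, M', K, h, _, _⟩ := hN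
    exact absurd h.symm (Multiset.cons_ne_zero)
  | cons a M ih => exact acc_cons a M ih

/-- A Dershowitz–Manna decrease is a sequence of one-step decreases. -/
theorem transGen_mstep (W : Multiset α) (hW : W ≠ 0) :
    ∀ (X Z : Multiset α), (∀ y ∈ Z, ∃ g ∈ W, y < g) →
      Relation.TransGen MStep (X + Z) (X + W) := by
  classical
  induction W using Multiset.induction with
  | empty => exact absurd rfl hW
  | cons a W' ih =>
    intro X Z hZ
    by_cases hW' : W' = 0
    · subst hW'
      refine Relation.TransGen.single ⟨a, X, Z, ?_, rfl, ?_⟩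
      · rw [add_comm, Multiset.cons_add, zero_add]
      · intro z hz
        obtain ⟨g, hg, hzg⟩ := hZ z hz
        rcases Multiset.mem_cons.mp hg with rfl | hg'
        · exact hzg
        · simp at hg'
    · set Za := Z.filter (· < a) with hZa
      set Z' := Z.filter (fun z => ¬ z < a) with hZ'
      have hsplit : Za + Z' = Z := Multiset.filter_add_not _ _
      have h1 : Relation.TransGen MStep ((X + Za) + Z') ((X + Za) + W') := by
        refine ih hW' (X + Za) Z' ?_
        intro y hy
        have hyZ : y ∈ Z := (Multiset.mem_filter.mp hy).1
        have hya : ¬ y < a := (Multiset.mem_filter.mp hy).2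
        obtain ⟨g, hg, hyg⟩ := hZ y hyZ
        rcases Multiset.mem_cons.mp hg with rfl | hg'
        · exact absurd hyg hya
        · exact ⟨g, hg', hyg⟩
      have h2 : MStep ((X + Za) + W') (X + (a ::ₘ W')) := by
        refine ⟨a, X + W', Za, ?_, ?_, ?_⟩
        · rw [Multiset.add_cons]
        · rw [add_right_comm]
        · intro k hk
          exact (Multiset.mem_filter.mp hk).2
      have heq : (X + Za) + Z' = X + Z := by rw [add_assoc, hsplit]
      rw [heq] at h1
      exact Relation.TransGen.tail h1 h2

end DM

/-- In a finite set, every element lies below a maximal element. -/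
theorem finset_exists_maximal_above {α : Type*} [PartialOrder α] (s : Finset α) :
    ∀ x ∈ s, ∃ y ∈ s, x ≤ y ∧ ∀ z ∈ s, ¬ y < z := by
  classical
  induction s using Finset.strongInduction with
  | _ s ih =>
    intro x hx
    by_cases hmax : ∀ z ∈ s, ¬ x < z
    · exact ⟨x, hx, le_rfl, hmax⟩
    · push_neg at hmax
      obtain ⟨z, hz, hxz⟩ := hmax
      have hzx : z ≠ x := fun h => absurd (h ▸ hxz) (lt_irrefl x)
      have hzmem : z ∈ s.erase x := Finset.mem_erase.mpr ⟨hzx, hz⟩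
      obtain ⟨y, hy, hzy, hymax⟩ :=
        ih (s.erase x) (Finset.erase_ssubset hx) z hzmem
      refine ⟨y, Finset.mem_of_mem_erase hy, le_of_lt (lt_of_lt_of_le hxz hzy), ?_⟩
      intro w hw hyw
      by_cases hwx : w = x
      · subst hwx
        exact absurd (lt_trans hxz (lt_of_le_of_lt hzy hyw)) (lt_irrefl _)
      · exact hymax w (Finset.mem_erase.mpr ⟨hwx, hw⟩) hyw

/-- In a complete, lower continuous, well-founded lattice, every finite join-cover
of `p` can be refined to a minimal join-cover of `p`. -/
theorem stmt10 {α : Type*} [CompleteLattice α] [WellFoundedLT α]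
    (hlc : LowerContinuous α) (p : α) (E : Finset α) (hE : Covers p E) :
    ∃ F : Finset α, MinCovers p F ∧ Refines F E := by
  classical
  have wfR : WellFounded (fun F G : Finset α => Relation.TransGen MStep F.val G.val) :=
    InvImage.wf _ mstep_wf.transGen
  have main : ∀ G : Finset α, Covers p G → ∃ F, MinCovers p F ∧ Refines F G := by
    intro G
    refine wfR.induction
      (C := fun G => Covers p G → ∃ F, MinCovers p F ∧ Refines F G) G ?_
    clear G
    intro G ih hG
    by_cases hmin : MinCovers p G
    · exact ⟨G, hmin, fun x hx => ⟨x, hx, le_rfl⟩⟩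
    · simp only [MinCovers, hG, true_and, not_forall] at hmin
      obtain ⟨X, hXc, hXr, hGX⟩ := hmin
      -- Y : the maximal elements of X
      set Y := X.filter (fun x => ∀ z ∈ X, ¬ x < z) with hYdef
      have hYX : Y ⊆ X := Finset.filter_subset _ _
      have hYc : Covers p Y := by
        refine le_trans hXc (Finset.sup_le ?_)
        intro x hx
        obtain ⟨y, hy, hxy, hymax⟩ := finset_exists_maximal_above X x hx
        have hyY : y ∈ Y := Finset.mem_filter.mpr ⟨hy, hymax⟩
        exact le_trans hxy (Finset.le_sup (f := id) hyY)
      have hYr : Refines Y G := fun y hy => hXr y (hYX hy)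
      -- G \ Y is nonempty
      have hGYne : (G \ Y).val ≠ 0 := by
        intro h
        apply hGX
        intro g hg
        have : g ∈ Y := by
          by_contra hgY
          have hmem : g ∈ G \ Y := Finset.mem_sdiff.mpr ⟨hg, hgY⟩
          rw [Finset.val_eq_zero.mp h] at hmem
          simp at hmem
        exact hYX this
      -- every element of Y \ G is strictly below an element of G \ Y
      have hcond : ∀ y ∈ (Y \ G).val, ∃ g ∈ (G \ Y).val, y < g := by
        intro y hy
        rw [Finset.mem_def.symm, Finset.mem_sdiff] at hy
        obtain ⟨hyY, hyG⟩ := hy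
        obtain ⟨e, he, hye⟩ := hYr y hyY
        have hne : y ≠ e := fun h => hyG (h ▸ he)
        have hlt : y < e := lt_of_le_of_ne hye hne
        have heY : e ∉ Y := by
          intro heY
          exact (Finset.mem_filter.mp hyY).2 e (hYX heY) hlt
        exact ⟨e, Finset.mem_def.mp (Finset.mem_sdiff.mpr ⟨he, heY⟩), hlt⟩
      -- the descent step
      have hstep : Relation.TransGen MStep Y.val G.val := by
        have key := transGen_mstep ((G \ Y).val) hGYne ((Y.val ∩ G.val)) ((Y \ G).val) ?_
        · have e1 : Y.val ∩ G.val + (Y \ G).val = Y.val := by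
            rw [Finset.sdiff_val, add_comm, Multiset.sub_add_inter]
          have e2 : Y.val ∩ G.val + (G \ Y).val = G.val := by
            rw [Finset.sdiff_val, add_comm, Multiset.inter_comm, Multiset.sub_add_inter]
          rwa [e1, e2] at key
        · exact hcond
      obtain ⟨F, hF, hFY⟩ := ih Y hstep hYc
      refine ⟨F, hF, ?_⟩
      intro f hf
      obtain ⟨y, hy, hfy⟩ := hFY f hf
      obtain ⟨e, he, hye⟩ := hYr y hy
      exact ⟨e, he, le_trans hfy hye⟩
  exact main E hE
end

section
/- Every algebraic atomistic lattice is strongly spatial: for every atom p and every finite join-cover A of p, there exists a minimal join-cover of p consisting of atoms that refines A. -/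
/-- In a compactly generated lattice, every atom is compact. -/
lemma atom_isCompact {α : Type*} [CompleteLattice α] [IsCompactlyGenerated α]
    {p : α} (hp : IsAtom p) : IsCompactElement p := by
  have h := sSup_compact_le_eq p
  -- p is the sup of compact elements below it; each is ⊥ or p
  have : ∃ c, IsCompactElement c ∧ c ≤ p ∧ c ≠ ⊥ := by
    by_contra hc
    push_neg at hc
    have : sSup { c : α | IsCompactElement c ∧ c ≤ p } ≤ ⊥ := by
      apply sSup_le
      rintro c ⟨h1, h2⟩
      by_cases hb : c = ⊥
      · simp [hb]
      · exact absurd (hc c h1 h2) hb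
    rw [h] at this
    exact hp.1 (le_bot_iff.mp this)
  obtain ⟨c, hc1, hc2, hc3⟩ := this
  rcases hp.le_iff.mp hc2 with rfl | rfl
  · exact absurd rfl hc3
  · exact hc1

/-- Every algebraic atomistic lattice is strongly spatial: every finite join-cover
of an atom `p` can be refined to a minimal join-cover of `p` consisting of atoms. -/
theorem stmt11 {α : Type*} [CompleteLattice α] [IsCompactlyGenerated α]
    [IsAtomistic α] (p : α) (hp : IsAtom p) (A : Finset α) (hA : Covers p A) :
    ∃ B : Finset α, MinCovers p B ∧ (∀ b ∈ B, IsAtom b) ∧ Refines B A := by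
  classical
  have hcomp := atom_isCompact hp
  -- The set of atoms below elements of A
  set S : Set α := { q | IsAtom q ∧ ∃ a ∈ A, q ≤ a } with hS
  have hle : p ≤ sSup S := by
    refine le_trans hA ?_
    apply Finset.sup_le
    intro a ha
    calc (id a : α) = sSup { q | IsAtom q ∧ q ≤ a } := (sSup_atoms_le_eq a).symm
      _ ≤ sSup S := sSup_le_sSup (by rintro q ⟨h1, h2⟩; exact ⟨h1, a, ha, h2⟩)
  obtain ⟨B₀, hB₀S, hB₀cov⟩ := (CompleteLattice.isCompactElement_iff_exists_le_sSup_of_le_sSup α p).mp hcomp S hle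
  -- pick a minimal-cardinality subset of B₀ covering p
  have hne : (B₀.powerset.filter (fun X => Covers p X)).Nonempty :=
    ⟨B₀, Finset.mem_filter.mpr ⟨Finset.mem_powerset.mpr (subset_refl _), hB₀cov⟩⟩
  obtain ⟨B, hBmem, hBmin⟩ := (B₀.powerset.filter (fun X => Covers p X)).exists_min_image
    Finset.card hne
  rw [Finset.mem_filter, Finset.mem_powerset] at hBmem
  obtain ⟨hBsub, hBcov⟩ := hBmem
  have hBatoms : ∀ b ∈ B, IsAtom b := fun b hb => (hB₀S (hBsub hb)).1
  refine ⟨B, ⟨hBcov, ?_⟩, hBatoms, fun b hb => (hB₀S (hBsub hb)).2⟩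
  -- minimality
  intro X hXcov hXref
  -- each x ∈ X is ⊥ or an element of B
  have key : ∀ x ∈ X, x = ⊥ ∨ x ∈ B := by
    intro x hx
    obtain ⟨e, he, hxe⟩ := hXref x hx
    rcases (hBatoms e he).le_iff.mp hxe with h | rfl
    · exact Or.inl h
    · exact Or.inr he
  -- X ∩ B covers p
  have hXB : Covers p (X ∩ B) := by
    refine le_trans hXcov ?_
    apply Finset.sup_le
    intro x hx
    rcases key x hx with rfl | hxB
    · exact bot_le
    · exact Finset.le_sup (Finset.mem_inter.mpr ⟨hx, hxB⟩)
  -- X ∩ B ⊆ B₀, covers p, so card B ≤ card (X ∩ B), but X ∩ B ⊆ B, so X ∩ B = B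
  have hmem : X ∩ B ∈ B₀.powerset.filter (fun Y => Covers p Y) := by
    rw [Finset.mem_filter, Finset.mem_powerset]
    exact ⟨le_trans (Finset.inter_subset_right) hBsub, hXB⟩
  have hcard := hBmin _ hmem
  have hsub : X ∩ B ⊆ B := Finset.inter_subset_right
  have : X ∩ B = B := Finset.eq_of_subset_of_card_le hsub hcard
  intro b hb
  rw [← this] at hb
  exact (Finset.mem_inter.mp hb).1
end

section
/- Let n be a positive integer and let p be a join-irreducible element in a complete, lower continuous, n-distributive lattice L. Then every finite join-cover of p can be refined to a minimal join-cover of p. -/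
namespace Stmt12Aux

open scoped Classical

variable {α : Type*} [CompleteLattice α]

/-- `F` is an irredundant family for `p` : no element can be dropped. -/
def Irr (p : α) (F : Finset α) : Prop := ∀ f ∈ F, ¬ p ≤ (F.erase f).sup id

theorem refines_refl (F : Finset α) : Refines F F := fun x hx => ⟨x, hx, le_rfl⟩

theorem refines_trans {F G H : Finset α} (h1 : Refines F G) (h2 : Refines G H) :
    Refines F H := by
  intro x hx
  obtain ⟨g, hg, hxg⟩ := h1 x hx
  obtain ⟨h, hh, hgh⟩ := h2 g hg
  exact ⟨h, hh, hxg.trans hgh⟩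

theorem refines_of_subset {F G : Finset α} (h : F ⊆ G) : Refines F G :=
  fun x hx => ⟨x, h hx, le_rfl⟩

/-- Any cover contains an irredundant subcover. -/
theorem exists_irr_subcover (p : α) (F : Finset α) (h : p ≤ F.sup id) :
    ∃ G, G ⊆ F ∧ p ≤ G.sup id ∧ Irr p G := by
  classical
  induction F using Finset.strongInductionOn with
  | _ F ih =>
    by_cases hI : Irr p F
    · exact ⟨F, Finset.Subset.refl F, h, hI⟩
    · have : ∃ f ∈ F, p ≤ (F.erase f).sup id := by
        by_contra hc
        push_neg at hc
        exact hI fun f hf => hc f hf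
      obtain ⟨f, hf, hle⟩ := this
      obtain ⟨G, hG1, hG2, hG3⟩ := ih (F.erase f) (Finset.erase_ssubset hf) hle
      exact ⟨G, hG1.trans (Finset.erase_subset f F), hG2, hG3⟩

/-- In an `n`-distributive lattice, irredundant covers of a sup-irreducible
element have at most `n` elements. -/
theorem card_le_of_irr {n : ℕ}
    (hdist : ∀ (x : α) (y : Fin (n + 1) → α),
      x ⊓ (⨆ i, y i) = ⨆ i : Fin (n + 1), (x ⊓ ⨆ j ∈ ({i}ᶜ : Finset (Fin (n + 1))), y j))
    {p : α} (hp : SupIrred p) {F : Finset α} (hcov : p ≤ F.sup id) (hirr : Irr p F) :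
    F.card ≤ n := by
  classical
  by_contra hc
  push_neg at hc
  obtain ⟨T, hTF, hTcard⟩ := F.exists_subset_card_eq hc
  set e : Fin (n + 1) → α := fun i => ((T.equivFin.symm (Fin.cast hTcard.symm i)) : α) with he
  have heT : ∀ i, e i ∈ T := fun i => (T.equivFin.symm (Fin.cast hTcard.symm i)).2
  have heinj : Function.Injective e := by
    intro i j hij
    have := Subtype.coe_injective hij
    have := T.equivFin.symm.injective this
    exact Fin.cast_injective _ this
  set y : Fin (n + 1) → α := fun i => if i = 0 then e i ⊔ (F \ T).sup id else e i with hy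
  have hley : ∀ i, e i ≤ y i := by
    intro i
    by_cases h0 : i = 0 <;> simp [hy, h0]
  have h1 : p ≤ ⨆ i, y i := by
    refine hcov.trans (Finset.sup_le fun f hf => ?_)
    by_cases hfT : f ∈ T
    · obtain ⟨j, hj⟩ : ∃ j, e j = f := by
        refine ⟨Fin.cast hTcard (T.equivFin ⟨f, hfT⟩), ?_⟩
        simp [he]
      exact hj ▸ (hley j).trans (le_iSup y j)
    · have : f ≤ (F \ T).sup id := Finset.le_sup (f := id) (Finset.mem_sdiff.2 ⟨hf, hfT⟩)
      refine this.trans (le_trans ?_ (le_iSup y 0))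
      simp [hy]
  have h2 : p = p ⊓ ⨆ i, y i := (inf_eq_left.2 h1).symm
  rw [hdist] at h2
  have h3 : (Finset.univ : Finset (Fin (n + 1))).sup
      (fun i => p ⊓ ⨆ j ∈ ({i}ᶜ : Finset (Fin (n + 1))), y j) = p := by
    rw [Finset.sup_univ_eq_iSup]; exact h2.symm
  obtain ⟨i, _, hi⟩ := hp.finset_sup_eq h3
  have h4 : p ≤ ⨆ j ∈ ({i}ᶜ : Finset (Fin (n + 1))), y j := by
    conv_lhs => rw [← hi]
    exact inf_le_right
  have h5 : (⨆ j ∈ ({i}ᶜ : Finset (Fin (n + 1))), y j) ≤ (F.erase (e i)).sup id := by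
    refine iSup₂_le fun j hj => ?_
    have hji : j ≠ i := by simpa using hj
    have hej : e j ∈ F.erase (e i) :=
      Finset.mem_erase.2 ⟨fun h => hji (heinj h), hTF (heT j)⟩
    have hrest : (F \ T).sup id ≤ (F.erase (e i)).sup id := by
      refine Finset.sup_mono fun x hx => ?_
      rcases Finset.mem_sdiff.1 hx with ⟨hxF, hxT⟩
      exact Finset.mem_erase.2 ⟨fun h => hxT (h ▸ heT i), hxF⟩
    by_cases h0 : j = 0
    · subst h0
      simp only [hy, if_pos rfl]
      exact sup_le (Finset.le_sup (f := id) hej) hrest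
    · simp only [hy, if_neg h0]
      exact Finset.le_sup (f := id) hej
  exact hirr (e i) (hTF (heT i)) (h4.trans h5)

/-- Any choice refinement map from a cover to an irredundant family of no
smaller cardinality is injective with image everything. -/
theorem key0 {p : α} {F G : Finset α} (hFcov : p ≤ F.sup id) (hG : Irr p G)
    (hcard : F.card ≤ G.card) (r : α → α) (hr : ∀ f ∈ F, r f ∈ G ∧ f ≤ r f) :
    Set.InjOn r ↑F ∧ F.image r = G := by
  classical
  have himg : F.image r ⊆ G := by
    intro g hg
    obtain ⟨f, hf, rfl⟩ := Finset.mem_image.1 hg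
    exact (hr f hf).1
  have hGsub : G ⊆ F.image r := by
    intro g0 hg0
    by_contra hng
    refine hG g0 hg0 (hFcov.trans (Finset.sup_le fun f hf => ?_))
    refine le_trans (hr f hf).2 (Finset.le_sup (f := id) (Finset.mem_erase.2 ⟨?_, (hr f hf).1⟩))
    intro h
    exact hng (h ▸ Finset.mem_image_of_mem r hf)
  have heq : F.image r = G := Finset.Subset.antisymm himg hGsub
  have hcard2 : (F.image r).card = F.card :=
    le_antisymm Finset.card_image_le (by rw [heq]; exact hcard)
  exact ⟨Finset.card_image_iff.1 hcard2, heq⟩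

section maps

variable {p : α} {F G : Finset α}

private theorem choice_map (href : Refines F G) (g1 : α) :
    ∃ r0 : α → α, ∀ x ∈ F, r0 x ∈ G ∧ x ≤ r0 x := by
  classical
  have : ∀ x : α, ∃ g, x ∈ F → g ∈ G ∧ x ≤ g := by
    intro x
    by_cases hx : x ∈ F
    · obtain ⟨g, hg, hle⟩ := href x hx
      exact ⟨g, fun _ => ⟨hg, hle⟩⟩
    · exact ⟨g1, fun h => absurd h hx⟩
  choose r0 hr0 using this
  exact ⟨r0, hr0⟩

/-- Each element of `F` lies below a unique element of `G`. -/
theorem parent_unique (hFcov : p ≤ F.sup id) (hG : Irr p G)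
    (hcard : F.card ≤ G.card) (href : Refines F G) :
    ∀ f ∈ F, ∀ g1 ∈ G, ∀ g2 ∈ G, f ≤ g1 → f ≤ g2 → g1 = g2 := by
  classical
  intro f hf g1 hg1 g2 hg2 h1 h2
  by_contra hne
  obtain ⟨r0, hr0⟩ := choice_map href g1
  set r : α → α := fun x => if x = f then g1 else r0 x with hrdef
  have hr : ∀ z ∈ F, r z ∈ G ∧ z ≤ r z := by
    intro z hz
    by_cases hzf : z = f
    · have hrz : r z = g1 := if_pos hzf
      rw [hrz]; exact ⟨hg1, hzf ▸ h1⟩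
    · have hrz : r z = r0 z := if_neg hzf
      rw [hrz]; exact hr0 z hz
  obtain ⟨hinj, _⟩ := key0 hFcov hG hcard r hr
  refine hG g1 hg1 (hFcov.trans (Finset.sup_le fun x hx => ?_))
  by_cases hxf : x = f
  · subst hxf
    exact h2.trans (Finset.le_sup (f := id) (Finset.mem_erase.2 ⟨Ne.symm hne, hg2⟩))
  · refine le_trans (hr x hx).2 (Finset.le_sup (f := id) (Finset.mem_erase.2 ⟨?_, (hr x hx).1⟩))
    intro hrg
    have hrf : r f = g1 := by simp [hrdef]
    exact hxf (hinj (Finset.mem_coe.2 hx) (Finset.mem_coe.2 hf) (hrg.trans hrf.symm))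

/-- Distinct elements of `F` lie below distinct elements of `G`. -/
theorem sibling_unique (hFcov : p ≤ F.sup id) (hG : Irr p G)
    (hcard : F.card ≤ G.card) (href : Refines F G) :
    ∀ f1 ∈ F, ∀ f2 ∈ F, ∀ g ∈ G, f1 ≤ g → f2 ≤ g → f1 = f2 := by
  classical
  intro f1 hf1 f2 hf2 g hg h1 h2
  obtain ⟨r0, hr0⟩ := choice_map href g
  set r : α → α := fun x => if x = f1 ∨ x = f2 then g else r0 x with hrdef
  have hr : ∀ z ∈ F, r z ∈ G ∧ z ≤ r z := by
    intro z hz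
    by_cases hzf : z = f1 ∨ z = f2
    · have hrz : r z = g := if_pos hzf
      rw [hrz]
      rcases hzf with rfl | rfl
      · exact ⟨hg, h1⟩
      · exact ⟨hg, h2⟩
    · have hrz : r z = r0 z := if_neg hzf
      rw [hrz]; exact hr0 z hz
  obtain ⟨hinj, _⟩ := key0 hFcov hG hcard r hr
  have e1 : r f1 = g := by simp [hrdef]
  have e2 : r f2 = g := by simp [hrdef]
  exact hinj (Finset.mem_coe.2 hf1) (Finset.mem_coe.2 hf2) (e1.trans e2.symm)

/-- Each element of `G` has some element of `F` below it. -/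
theorem child_exists (hFcov : p ≤ F.sup id) (hG : Irr p G)
    (hcard : F.card ≤ G.card) (href : Refines F G) :
    ∀ g ∈ G, ∃ f ∈ F, f ≤ g := by
  classical
  intro g hg
  obtain ⟨r0, hr0⟩ := choice_map href g
  obtain ⟨_, himg⟩ := key0 hFcov hG hcard r0 hr0
  rw [← himg] at hg
  obtain ⟨f, hf, rfl⟩ := Finset.mem_image.1 hg
  exact ⟨f, hf, (hr0 f hf).2⟩

end maps

/-- One step of lower continuity for binary sups of infima over a jointly
downward directed family. -/
theorem lc2' (hlc : LowerContinuous α) {ι : Type*} {S : Set ι} (hS : S.Nonempty)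
    (u v : ι → α)
    (hdir : ∀ i ∈ S, ∀ j ∈ S, ∃ k ∈ S, u k ≤ u i ∧ u k ≤ u j ∧ v k ≤ v i ∧ v k ≤ v j) :
    ⨅ i ∈ S, (u i ⊔ v i) ≤ (⨅ i ∈ S, u i) ⊔ (⨅ i ∈ S, v i) := by
  have hvdir : DirectedOn (· ≥ ·) (v '' S) := by
    rintro _ ⟨i, hi, rfl⟩ _ ⟨j, hj, rfl⟩
    obtain ⟨k, hk, _, _, h3, h4⟩ := hdir i hi j hj
    exact ⟨v k, ⟨k, hk, rfl⟩, h3, h4⟩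
  have hudir : DirectedOn (· ≥ ·) (u '' S) := by
    rintro _ ⟨i, hi, rfl⟩ _ ⟨j, hj, rfl⟩
    obtain ⟨k, hk, h1, h2, _, _⟩ := hdir i hi j hj
    exact ⟨u k, ⟨k, hk, rfl⟩, h1, h2⟩
  have hv : (⨅ i ∈ S, v i) = sInf (v '' S) := sInf_image.symm
  have hu : (⨅ i ∈ S, u i) = sInf (u '' S) := sInf_image.symm
  have e1 : (⨅ i ∈ S, u i) ⊔ (⨅ i ∈ S, v i) = ⨅ j ∈ S, ((⨅ i ∈ S, u i) ⊔ v j) := by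
    rw [hv, hlc _ _ (hS.image v) hvdir, iInf_image]
  have e2 : ∀ j ∈ S, (⨅ i ∈ S, u i) ⊔ v j = ⨅ i ∈ S, (u i ⊔ v j) := by
    intro j hj
    rw [sup_comm, hu, hlc _ _ (hS.image u) hudir, iInf_image]
    exact iInf_congr fun i => iInf_congr fun _ => sup_comm _ _
  rw [e1]
  refine le_iInf₂ fun j hj => ?_
  rw [e2 j hj]
  refine le_iInf₂ fun i hi => ?_
  obtain ⟨k, hk, h1, _, _, h4⟩ := hdir i hi j hj
  exact le_trans (iInf₂_le k hk) (sup_le_sup h1 h4)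

/-- Finite sups of infima over a jointly downward directed family. -/
theorem lcn (hlc : LowerContinuous α) {ι β : Type*} {S : Set ι} (hS : S.Nonempty)
    (w : β → ι → α) (B : Finset β)
    (hdir : ∀ i ∈ S, ∀ j ∈ S, ∃ k ∈ S, ∀ b ∈ B, w b k ≤ w b i ∧ w b k ≤ w b j) :
    ⨅ i ∈ S, B.sup (fun b => w b i) ≤ B.sup (fun b => ⨅ i ∈ S, w b i) := by
  classical
  induction B using Finset.induction with
  | empty =>
    obtain ⟨i0, hi0⟩ := hS
    simpa using iInf₂_le (f := fun i (_ : i ∈ S) => (⊥ : α)) i0 hi0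
  | @insert a B ha ih =>
    have hdir' : ∀ i ∈ S, ∀ j ∈ S, ∃ k ∈ S, ∀ b ∈ B, w b k ≤ w b i ∧ w b k ≤ w b j := by
      intro i hi j hj
      obtain ⟨k, hk, h⟩ := hdir i hi j hj
      exact ⟨k, hk, fun b hb => h b (Finset.mem_insert_of_mem hb)⟩
    have step : ⨅ i ∈ S, (w a i ⊔ B.sup (fun b => w b i)) ≤
        (⨅ i ∈ S, w a i) ⊔ (⨅ i ∈ S, B.sup (fun b => w b i)) := by
      refine lc2' hlc hS _ _ ?_
      intro i hi j hj
      obtain ⟨k, hk, h⟩ := hdir i hi j hj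
      have hma : a ∈ insert a B := Finset.mem_insert_self a B
      refine ⟨k, hk, (h a hma).1, (h a hma).2, ?_, ?_⟩
      · exact Finset.sup_mono_fun fun b hb => (h b (Finset.mem_insert_of_mem hb)).1
      · exact Finset.sup_mono_fun fun b hb => (h b (Finset.mem_insert_of_mem hb)).2
    calc ⨅ i ∈ S, (insert a B).sup (fun b => w b i)
        = ⨅ i ∈ S, (w a i ⊔ B.sup (fun b => w b i)) := by
          exact iInf_congr fun i => iInf_congr fun _ => Finset.sup_insert
      _ ≤ (⨅ i ∈ S, w a i) ⊔ (⨅ i ∈ S, B.sup (fun b => w b i)) := step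
      _ ≤ (⨅ i ∈ S, w a i) ⊔ B.sup (fun b => ⨅ i ∈ S, w b i) := sup_le_sup_left (ih hdir') _
      _ = (insert a B).sup (fun b => ⨅ i ∈ S, w b i) := by rw [Finset.sup_insert]

/-- A refinement chain of irredundant covers has an irredundant cover refining
all its members. -/
theorem chain_bound {n : ℕ}
    (hdist : ∀ (x : α) (y : Fin (n + 1) → α),
      x ⊓ (⨆ i, y i) = ⨆ i : Fin (n + 1), (x ⊓ ⨆ j ∈ ({i}ᶜ : Finset (Fin (n + 1))), y j))
    (hlc : LowerContinuous α) {p : α} (hp : SupIrred p)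
    (C : Set (Finset α)) (hCcov : ∀ F ∈ C, p ≤ F.sup id) (hCirr : ∀ F ∈ C, Irr p F)
    (hchain : ∀ F ∈ C, ∀ G ∈ C, Refines F G ∨ Refines G F)
    (hCne : C.Nonempty) :
    ∃ D : Finset α, p ≤ D.sup id ∧ Irr p D ∧ ∀ F ∈ C, Refines D F := by
  classical
  have hbdd : ∀ F ∈ C, F.card ≤ n := fun F hF =>
    card_le_of_irr hdist hp (hCcov F hF) (hCirr F hF)
  set K : Set ℕ := (fun F : Finset α => F.card) '' C with hK
  have hKne : K.Nonempty := hCne.image _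
  have hKbdd : BddAbove K := ⟨n, by rintro _ ⟨F, hF, rfl⟩; exact hbdd F hF⟩
  obtain ⟨F0, hF0C, hF0card⟩ : ∃ F0 ∈ C, F0.card = sSup K := Nat.sSup_mem hKne hKbdd
  have hcardle : ∀ F ∈ C, F.card ≤ F0.card := fun F hF =>
    hF0card ▸ le_csSup hKbdd ⟨F, hF, rfl⟩
  set S : Set (Finset α) := {F | F ∈ C ∧ Refines F F0} with hSdef
  have hF0S : F0 ∈ S := ⟨hF0C, refines_refl F0⟩
  have hSne : S.Nonempty := ⟨F0, hF0S⟩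
  have hirr0 : Irr p F0 := hCirr F0 hF0C
  set t : Finset α → α → α := fun F f0 => (F.filter (fun x => x ≤ f0)).sup id with htdef
  have claimA : ∀ F ∈ S, ∀ f0 ∈ F0, t F f0 ∈ F ∧ t F f0 ≤ f0 ∧
      ∀ x ∈ F, x ≤ f0 → x = t F f0 := by
    intro F hF f0 hf0
    obtain ⟨f, hfF, hffo⟩ :=
      child_exists (hCcov F hF.1) hirr0 (hcardle F hF.1) hF.2 f0 hf0
    have huniq : ∀ x ∈ F, x ≤ f0 → x = f := fun x hx hxf0 =>
      sibling_unique (hCcov F hF.1) hirr0 (hcardle F hF.1) hF.2 x hx f hfF f0 hf0 hxf0 hffo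
    have hfilter : F.filter (fun x => x ≤ f0) = {f} := by
      ext x
      simp only [Finset.mem_filter, Finset.mem_singleton]
      constructor
      · rintro ⟨hx, hxle⟩; exact huniq x hx hxle
      · rintro rfl; exact ⟨hfF, hffo⟩
    have ht : t F f0 = f := by
      simp only [htdef, hfilter, Finset.sup_singleton, id]
    rw [ht]
    exact ⟨hfF, hffo, huniq⟩
  have mono : ∀ F ∈ S, ∀ G ∈ S, Refines F G → ∀ f0 ∈ F0, t F f0 ≤ t G f0 := by
    intro F hF G hG hFG f0 hf0
    obtain ⟨hfF, hffo, _⟩ := claimA F hF f0 hf0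
    obtain ⟨g, hgG, hfg⟩ := hFG _ hfF
    obtain ⟨g0, hg0, hgg0⟩ := hG.2 g hgG
    have hg0f0 : g0 = f0 :=
      parent_unique (hCcov F hF.1) hirr0 (hcardle F hF.1) hF.2 (t F f0) hfF g0 hg0 f0 hf0
        (hfg.trans hgg0) hffo
    have hgf0 : g ≤ f0 := hg0f0 ▸ hgg0
    have hgt : g = t G f0 := (claimA G hG f0 hf0).2.2 g hgG hgf0
    exact hgt ▸ hfg
  have supid : ∀ F ∈ S, F0.sup (fun f0 => t F f0) = F.sup id := by
    intro F hF
    apply le_antisymm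
    · exact Finset.sup_le fun f0 hf0 => Finset.le_sup (f := id) (claimA F hF f0 hf0).1
    · refine Finset.sup_le fun f hf => ?_
      obtain ⟨f0, hf0, hffo⟩ := hF.2 f hf
      have hft : f = t F f0 := (claimA F hF f0 hf0).2.2 f hf hffo
      exact hft ▸ Finset.le_sup (f := fun f0 => t F f0) hf0
  set d : α → α := fun f0 => ⨅ F ∈ S, t F f0 with hddef
  have hpd : p ≤ F0.sup d := by
    have h1 : p ≤ ⨅ F ∈ S, F0.sup (fun f0 => t F f0) :=
      le_iInf₂ fun F hF => (supid F hF) ▸ hCcov F hF.1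
    refine h1.trans (lcn hlc hSne (fun f0 F => t F f0) F0 ?_)
    intro i hi j hj
    rcases hchain i hi.1 j hj.1 with h | h
    · exact ⟨i, hi, fun b hb => ⟨le_rfl, mono i hi j hj h b hb⟩⟩
    · exact ⟨j, hj, fun b hb => ⟨mono j hj i hi h b hb, le_rfl⟩⟩
  set D0 : Finset α := F0.image d with hD0def
  have hD0cov : p ≤ D0.sup id := by
    rw [hD0def, Finset.sup_image]
    exact hpd
  have hD0ref : ∀ F ∈ S, Refines D0 F := by
    intro F hF x hx
    obtain ⟨f0, hf0, rfl⟩ := Finset.mem_image.1 hx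
    exact ⟨t F f0, (claimA F hF f0 hf0).1, iInf₂_le F hF⟩
  have hD0refC : ∀ G ∈ C, Refines D0 G := by
    intro G hG
    by_cases hGS : Refines G F0
    · exact hD0ref G ⟨hG, hGS⟩
    · rcases hchain G hG F0 hF0C with h | h
      · exact absurd h hGS
      · exact refines_trans (hD0ref F0 hF0S) h
  obtain ⟨D, hDsub, hDcov, hDirr⟩ := exists_irr_subcover p D0 hD0cov
  exact ⟨D, hDcov, hDirr, fun F hF =>
    refines_trans (refines_of_subset hDsub) (hD0refC F hF)⟩

end Stmt12Aux

open Stmt12Aux in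
/-- Let `n ≥ 1` and let `p` be a join-irreducible element in a complete, lower
continuous, `n`-distributive lattice. Then every finite join-cover of `p` can be
refined to a minimal join-cover of `p`. -/
theorem stmt12 {α : Type*} [CompleteLattice α] (n : ℕ) (hn : 0 < n)
    (hdist : ∀ (x : α) (y : Fin (n + 1) → α),
      x ⊓ (⨆ i, y i) = ⨆ i : Fin (n + 1), (x ⊓ ⨆ j ∈ ({i}ᶜ : Finset (Fin (n + 1))), y j))
    (hlc : LowerContinuous α)
    (p : α) (hp : SupIrred p) (E : Finset α) (hE : Covers p E) :
    ∃ F : Finset α, MinCovers p F ∧ Refines F E := by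
  classical
  obtain ⟨E', hE'sub, hE'cov, hE'irr⟩ := exists_irr_subcover p E hE
  set P : Set (Finset α) := {F | (p ≤ F.sup id ∧ Irr p F) ∧ Refines F E} with hPdef
  have hE'P : E' ∈ P := ⟨⟨hE'cov, hE'irr⟩, refines_of_subset hE'sub⟩
  haveI : Nonempty {F // F ∈ P} := ⟨⟨E', hE'P⟩⟩
  set r : {F // F ∈ P} → {F // F ∈ P} → Prop := fun a b => Refines b.1 a.1 with hrdef
  have htrans : ∀ {a b c : {F // F ∈ P}}, r a b → r b c → r a c := by
    intro a b c h1 h2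
    exact refines_trans h2 h1
  have hchains : ∀ c : Set {F // F ∈ P}, IsChain r c → c.Nonempty →
      ∃ ub, ∀ a ∈ c, r a ub := by
    intro c hc hcne
    set C : Set (Finset α) := Subtype.val '' c with hCdef
    have hCne : C.Nonempty := hcne.image _
    have hCcov : ∀ F ∈ C, p ≤ F.sup id := by
      rintro _ ⟨a, ha, rfl⟩; exact a.2.1.1
    have hCirr : ∀ F ∈ C, Irr p F := by
      rintro _ ⟨a, ha, rfl⟩; exact a.2.1.2
    have hchain : ∀ F ∈ C, ∀ G ∈ C, Refines F G ∨ Refines G F := by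
      rintro _ ⟨a, ha, rfl⟩ _ ⟨b, hb, rfl⟩
      by_cases hab : a = b
      · subst hab; exact Or.inl (refines_refl _)
      · rcases hc ha hb hab with h | h
        · exact Or.inr h
        · exact Or.inl h
    obtain ⟨D, hDcov, hDirr, hDref⟩ :=
      chain_bound hdist hlc hp C hCcov hCirr hchain hCne
    obtain ⟨a0, ha0⟩ := hcne
    have hDE : Refines D E := refines_trans (hDref a0.1 ⟨a0, ha0, rfl⟩) a0.2.2
    refine ⟨⟨D, ⟨hDcov, hDirr⟩, hDE⟩, fun a ha => ?_⟩
    exact hDref a.1 ⟨a, ha, rfl⟩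
  obtain ⟨m, hm⟩ := exists_maximal_of_nonempty_chains_bounded hchains htrans
  refine ⟨m.1, ⟨m.2.1.1, ?_⟩, m.2.2⟩
  intro X hXcov hXref
  obtain ⟨X', hX'sub, hX'cov, hX'irr⟩ := exists_irr_subcover p X hXcov
  have hX'refF : Refines X' m.1 := refines_trans (refines_of_subset hX'sub) hXref
  have hX'E : Refines X' E := refines_trans hX'refF m.2.2
  have hX'P : X' ∈ P := ⟨⟨hX'cov, hX'irr⟩, hX'E⟩
  have h2 : Refines m.1 X' := hm ⟨X', hX'P⟩ hX'refF
  intro f hf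
  obtain ⟨x, hx, hfx⟩ := h2 f hf
  obtain ⟨f', hf', hxf'⟩ := hX'refF x hx
  have hff' : f = f' := by
    by_contra hne
    refine m.2.1.2 f hf (m.2.1.1.trans (Finset.sup_le fun g hg => ?_))
    by_cases hgf : g = f
    · subst hgf
      exact (hfx.trans hxf').trans
        (Finset.le_sup (f := id) (Finset.mem_erase.2 ⟨Ne.symm hne, hf'⟩))
    · exact Finset.le_sup (f := id) (Finset.mem_erase.2 ⟨hgf, hg⟩)
  have hxf : x = f := le_antisymm (hff' ▸ hxf') hfx
  exact hX'sub (hxf ▸ hx)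
end

section
/- Let p, q, r be join-irreducible elements of a modular lattice L with col(p,q,r), i.e., p, q, r pairwise incomparable and p ∨ q = p ∨ r = q ∨ r. Then {q, r} is a tight join-cover of p: p ≤ q ∨ r, and for every x < q, p ≰ x ∨ r, and for every y < r, p ≰ q ∨ y. -/
/-- If `p, q, r` are pairwise incomparable join-irreducible elements of a modular
lattice with `p ⊔ q = p ⊔ r = q ⊔ r`, then `{q, r}` is a tight join-cover of `p`. -/
theorem stmt14 {α : Type*} [Lattice α] [IsModularLattice α] (p q r : α)
    (hp : SupIrred p) (hq : SupIrred q) (hr : SupIrred r)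
    (hpq : ¬ p ≤ q ∧ ¬ q ≤ p) (hpr : ¬ p ≤ r ∧ ¬ r ≤ p) (hqr : ¬ q ≤ r ∧ ¬ r ≤ q)
    (col₁ : p ⊔ q = p ⊔ r) (col₂ : p ⊔ r = q ⊔ r) :
    p ≤ q ⊔ r ∧ (∀ x, x < q → ¬ p ≤ x ⊔ r) ∧ (∀ y, y < r → ¬ p ≤ q ⊔ y) := by
  have hpqr : p ≤ q ⊔ r := by
    calc p ≤ p ⊔ q := le_sup_left
    _ = q ⊔ r := col₁.trans col₂
  refine ⟨hpqr, ?_, ?_⟩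
  · intro x hx hle
    have hqle : q ≤ x ⊔ r := by
      have : q ⊔ r ≤ x ⊔ r := by
        rw [← col₂]
        exact sup_le hle le_sup_right
      exact le_sup_left.trans this
    have hmod : x ⊔ r ⊓ q = (x ⊔ r) ⊓ q := (sup_inf_assoc_of_le r hx.le).symm
    have : x ⊔ r ⊓ q = q := by rw [hmod, inf_eq_right.mpr hqle]
    rcases hq.2 this with h | h
    · exact hx.ne h
    · exact hqr.1 (h ▸ inf_le_left)
  · intro y hy hle
    have hrle : r ≤ y ⊔ q := by
      have : q ⊔ r ≤ q ⊔ y := by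
        rw [← col₂, ← col₁]
        exact sup_le hle le_sup_left
      exact le_sup_right.trans (this.trans (sup_comm q y).le)
    have hmod : y ⊔ q ⊓ r = (y ⊔ q) ⊓ r := (sup_inf_assoc_of_le q hy.le).symm
    have : y ⊔ q ⊓ r = r := by rw [hmod, inf_eq_right.mpr hrle]
    rcases hr.2 this with h | h
    · exact hy.ne h
    · exact hqr.2 (h ▸ inf_le_left)
end

section
/- Let D be a nontrivial bounded distributive lattice. Define L(D) = 2 × D × 2 × 2 and K(D) = {(x₀,x₁,x₂,x₃) ∈ L(D) : for all i < j < k in {0,1,2,3}, x_i⁻ ∧ x_k⁻ ≤ x_j}, where x⁻ = 1 if x = 1 and x⁻ = 0 otherwise. Then the map γ : L(D) → L(D) given by γ(x)_j = x_j ∨ ⋁{x_i⁻ ∧ x_k⁻ : i < j < k} sends each x to the least element of K(D) above x; consequently K(D), with the componentwise order, is a closure system in L(D), hence a bounded lattice and a meet-subsemilattice of L(D). -/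
open Classical in
/-- Membership in `K(D) ⊆ L(D) = 2 × D × 2 × 2`: for all `i < j < k` in
`{0,1,2,3}`, `xᵢ⁻ ⊓ xₖ⁻ ≤ x_j`, where `x⁻ = 1` if `x = 1` and `x⁻ = 0` otherwise. -/
def inK (D : Type*) [DistribLattice D] [BoundedOrder D]
    (x : Bool × D × Bool × Bool) : Prop :=
  (x.1 = true → x.2.2.1 = true → x.2.1 = ⊤) ∧
  (x.1 = true → x.2.2.2 = true → x.2.1 = ⊤) ∧
  (x.1 = true → x.2.2.2 = true → x.2.2.1 = true) ∧
  (x.2.1 = ⊤ → x.2.2.2 = true → x.2.2.1 = true)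

open Classical in
/-- The closure map `γ : L(D) → L(D)`, `γ(x)_j = x_j ⊔ ⋁ {xᵢ⁻ ⊓ xₖ⁻ : i < j < k}`. -/
noncomputable def gam (D : Type*) [DistribLattice D] [BoundedOrder D]
    (x : Bool × D × Bool × Bool) : Bool × D × Bool × Bool :=
  (x.1,
   x.2.1 ⊔ (if x.1 = true ∧ x.2.2.1 = true then (⊤ : D) else ⊥)
         ⊔ (if x.1 = true ∧ x.2.2.2 = true then (⊤ : D) else ⊥),
   x.2.2.1 ⊔ (x.1 ⊓ x.2.2.2) ⊔ ((if x.2.1 = (⊤ : D) then true else false) ⊓ x.2.2.2),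
   x.2.2.2)

/-- `γ(x)` is the least element of `K(D)` above `x`; consequently `K(D)` is a
closure system in `L(D)`, in particular it is closed under (componentwise) meets. -/
theorem stmt16 (D : Type*) [DistribLattice D] [BoundedOrder D] [Nontrivial D] :
    (∀ x : Bool × D × Bool × Bool, IsLeast {y | inK D y ∧ x ≤ y} (gam D x)) ∧
      (∀ y z : Bool × D × Bool × Bool, inK D y → inK D z → inK D (y ⊓ z)) := by

  refine ⟨?_, ?_⟩
  · rintro ⟨a, d, b, c⟩
    refine ⟨⟨?_, ?_⟩, ?_⟩
    · by_cases hd : d = ⊤ <;> cases a <;> cases b <;> cases c <;>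
        simp_all [inK, gam]
    · cases a <;> cases b <;> cases c <;>
        simp [gam, Prod.le_def]
    · rintro ⟨e, f, g, h⟩ ⟨hK, hle⟩
      simp only [Set.mem_setOf_eq, inK] at hK
      obtain ⟨h1, h2, h3, h4⟩ := hK
      obtain ⟨l1, l2, l3, l4⟩ : a ≤ e ∧ d ≤ f ∧ b ≤ g ∧ c ≤ h := by
        simpa [Prod.le_def] using hle
      have hf : d = ⊤ → f = ⊤ := fun hd => top_le_iff.mp (hd ▸ l2)
      rw [Bool.le_iff_imp] at l1 l3 l4
      simp only [gam, Prod.le_def]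
      refine ⟨Bool.le_iff_imp.mpr l1, ?_, ?_, Bool.le_iff_imp.mpr l4⟩
      · refine sup_le (sup_le l2 ?_) ?_
        · split
          · next hab => exact (h1 (l1 hab.1) (l3 hab.2)).ge
          · exact bot_le
        · split
          · next hac => exact (h2 (l1 hac.1) (l4 hac.2)).ge
          · exact bot_le
      · rw [Bool.le_iff_imp]
        intro hg
        rcases Bool.or_eq_true_iff.mp hg with hg | hg
        · rcases Bool.or_eq_true_iff.mp hg with hg | hg
          · exact l3 hg
          · rcases Bool.and_eq_true_iff.mp hg with ⟨ha, hc⟩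
            exact h3 (l1 ha) (l4 hc)
        · rcases Bool.and_eq_true_iff.mp hg with ⟨hdt, hc⟩
          have : d = ⊤ := by revert hdt; split <;> simp_all
          exact h4 (hf this) (l4 hc)
  · rintro ⟨a, d, b, c⟩ ⟨e, f, g, h⟩ hy hz
    simp only [inK] at hy hz ⊢
    obtain ⟨h1, h2, h3, h4⟩ := hy
    obtain ⟨k1, k2, k3, k4⟩ := hz
    have binf : ∀ u v : Bool, u ⊓ v = (u && v) := fun _ _ => rfl
    simp only [Prod.inf_def, binf] at *
    constructor
    · rintro ha hb
      simp only [Bool.and_eq_true] at ha hb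
      rw [h1 ha.1 hb.1, k1 ha.2 hb.2, top_inf_eq]
    refine ⟨?_, ?_, ?_⟩
    · rintro ha hc
      simp only [Bool.and_eq_true] at ha hc
      rw [h2 ha.1 hc.1, k2 ha.2 hc.2, top_inf_eq]
    · rintro ha hc
      simp only [Bool.and_eq_true] at ha hc
      simp [h3 ha.1 hc.1, k3 ha.2 hc.2]
    · rintro hdf hc
      rw [inf_eq_top_iff] at hdf
      simp only [Bool.and_eq_true] at hc
      simp [h4 hdf.1 hc.1, k4 hdf.2 hc.2]
end
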